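/- Let I_2(μ) = sup_{f>0} ⟨1/f, −L f⟩_μ be the Donsker–Varadhan level-2 rate functional of an irreducible finite-state Markov chain with generator L and invariant measure π, and let I_2^S(μ) = ⟨√(μ/π), −L_S √(μ/π)⟩_π be the rate functional of the symmetrized chain. Then I_2(μ) ≥ I_2^S(μ) for every probability measure μ on Ω. -/

import Mathlib

open Finset

/-- The Donsker–Varadhan level-2 rate functional
`I_2(μ) = sup_{f>0} ⟨1/f, −L f⟩_μ` of an irreducible finite-state Markov chain dominates
the rate functional `I_2^S(μ) = ⟨√(μ/π), −L_S √(μ/π)⟩_π` of the symmetrized chain: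
`I_2(μ) ≥ I_2^S(μ)`. -/
theorem level2_rate_function_lower_bound
    {Ω : Type*} [Fintype Ω] [DecidableEq Ω] [Nonempty Ω]
    (c : Ω → Ω → ℝ) (π : Ω → ℝ)
    (hc : ∀ x y, x ≠ y → 0 ≤ c x y)
    (hπpos : ∀ x, 0 < π x) (hπsum : ∑ x, π x = 1)
    (hinv : ∀ f : Ω → ℝ, ∑ x, π x * (∑ y, c x y * (f y - f x)) = 0)
    (hirr : ∀ x y : Ω, x ≠ y → ∃ (k : ℕ) (p : Fin (k + 1) → Ω),
      p 0 = x ∧ p (Fin.last k) = y ∧ ∀ i : Fin k, 0 < c (p i.castSucc) (p i.succ))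
    (cs : Ω → Ω → ℝ)
    (hcs : ∀ x y, cs x y = (c x y + π y * c y x / π x) / 2)
    (μ : Ω → ℝ) (hμ : ∀ x, 0 ≤ μ x) (hμsum : ∑ x, μ x = 1) :
    (∑ x, Real.sqrt (μ x / π x)
        * (-(∑ y, cs x y * (Real.sqrt (μ y / π y) - Real.sqrt (μ x / π x)))) * π x)
    ≤ ⨆ f : {f : Ω → ℝ // ∀ x, 0 < f x},
        ∑ x, μ x * ((f.1 x)⁻¹ * (-(∑ y, c x y * (f.1 y - f.1 x)))) := by
  classical
  set g : Ω → ℝ := fun x => Real.sqrt (μ x / π x) with hgdef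
  have hgnn : ∀ x, 0 ≤ g x := fun x => Real.sqrt_nonneg _
  have hμg : ∀ x, π x * (g x * g x) = μ x := by
    intro x
    have h1 : g x * g x = μ x / π x :=
      Real.mul_self_sqrt (div_nonneg (hμ x) (hπpos x).le)
    rw [h1, mul_div_cancel₀ _ (hπpos x).ne']
  have hμ1 : ∀ x, μ x ≤ 1 := by
    intro x
    calc μ x ≤ ∑ y, μ y := Finset.single_le_sum (fun y _ => hμ y) (Finset.mem_univ x)
    _ = 1 := hμsum
  set Lg : Ω → ℝ := fun x => ∑ y, c x y * (g y - g x) with hLg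
  -- Step 1 : symmetrization identity
  have hpush : ∀ (d : Ω → Ω → ℝ) (a b : ℝ) (x : Ω),
      a * (-(∑ y, d x y * (g y - g x))) * b
        = -(∑ y, b * (a * (d x y * (g y - g x)))) := by
    intro d a b x
    rw [← Finset.mul_sum, ← Finset.mul_sum]
    ring
  have hsym : (∑ x, g x * (-(∑ y, cs x y * (g y - g x))) * π x)
      = ∑ x, π x * g x * (-(Lg x)) := by
    have hinv2 := hinv (fun x => g x * g x)
    have key : (∑ x, ∑ y, π x * (g x * (cs x y * (g y - g x))))
        = ∑ x, ∑ y, π x * (g x * (c x y * (g y - g x))) := by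
      have step1 : ∀ x y : Ω, π x * (g x * (cs x y * (g y - g x)))
          = (π x * (g x * (c x y * (g y - g x)))
            + π y * (g x * (c y x * (g y - g x)))) / 2 := by
        intro x y
        rw [hcs]
        field_simp [(hπpos x).ne']
      have hswap : (∑ x, ∑ y, π y * (g x * (c y x * (g y - g x))))
          = ∑ x, ∑ y, π x * (g y * (c x y * (g x - g y))) := by
        rw [Finset.sum_comm]
      have hdiff : (∑ x, ∑ y, π x * (g x * (c x y * (g y - g x))))
          - (∑ x, ∑ y, π x * (g y * (c x y * (g x - g y)))) = 0 := by
        rw [← Finset.sum_sub_distrib]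
        have : ∀ x : Ω, (∑ y, π x * (g x * (c x y * (g y - g x))))
            - (∑ y, π x * (g y * (c x y * (g x - g y))))
            = π x * (∑ y, c x y * (g y * g y - g x * g x)) := by
          intro x
          rw [← Finset.sum_sub_distrib, Finset.mul_sum]
          apply Finset.sum_congr rfl
          intro y _
          ring
        rw [Finset.sum_congr rfl (fun x _ => this x)]
        exact hinv2
      calc (∑ x, ∑ y, π x * (g x * (cs x y * (g y - g x))))
          = ∑ x, ∑ y, ((π x * (g x * (c x y * (g y - g x)))
            + π y * (g x * (c y x * (g y - g x)))) / 2) := by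
            exact Finset.sum_congr rfl fun x _ =>
              Finset.sum_congr rfl fun y _ => step1 x y
        _ = ((∑ x, ∑ y, π x * (g x * (c x y * (g y - g x))))
            + ∑ x, ∑ y, π y * (g x * (c y x * (g y - g x)))) / 2 := by
            rw [← Finset.sum_add_distrib, Finset.sum_div]
            apply Finset.sum_congr rfl
            intro x _
            rw [← Finset.sum_add_distrib, Finset.sum_div]
        _ = ∑ x, ∑ y, π x * (g x * (c x y * (g y - g x))) := by
            rw [hswap]
            linarith
    calc (∑ x, g x * (-(∑ y, cs x y * (g y - g x))) * π x)
        = ∑ x, -(∑ y, π x * (g x * (cs x y * (g y - g x)))) :=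
          Finset.sum_congr rfl fun x _ => hpush cs (g x) (π x) x
      _ = -(∑ x, ∑ y, π x * (g x * (cs x y * (g y - g x)))) :=
          Finset.sum_neg_distrib _
      _ = -(∑ x, ∑ y, π x * (g x * (c x y * (g y - g x)))) := by rw [key]
      _ = ∑ x, -(∑ y, π x * (g x * (c x y * (g y - g x)))) :=
          (Finset.sum_neg_distrib _).symm
      _ = ∑ x, π x * g x * (-(Lg x)) := by
          apply Finset.sum_congr rfl
          intro x _
          have h := hpush c (g x) (π x) x
          show -(∑ y, π x * (g x * (c x y * (g y - g x))))
            = π x * g x * (-(∑ y, c x y * (g y - g x)))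
          rw [← h]
          ring
  -- Step 2 : the supremand is bounded above
  have hBdd : BddAbove (Set.range fun f : {f : Ω → ℝ // ∀ x, 0 < f x} =>
      ∑ x, μ x * ((f.1 x)⁻¹ * (-(∑ y, c x y * (f.1 y - f.1 x))))) := by
    refine ⟨∑ x, ∑ y, |c x y|, ?_⟩
    rintro _ ⟨f, rfl⟩
    apply Finset.sum_le_sum
    intro x _
    have hfx := f.2 x
    have hinner : (f.1 x)⁻¹ * (-(∑ y, c x y * (f.1 y - f.1 x))) ≤ ∑ y, |c x y| := by
      have : (f.1 x)⁻¹ * (-(∑ y, c x y * (f.1 y - f.1 x)))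
          = ∑ y, c x y * (f.1 x - f.1 y) / f.1 x := by
        rw [← Finset.sum_neg_distrib, Finset.mul_sum]
        apply Finset.sum_congr rfl
        intro y _
        field_simp
        ring
      rw [this]
      apply Finset.sum_le_sum
      intro y _
      by_cases hxy : y = x
      · subst hxy
        simp [abs_nonneg]
      · have hcxy := hc x y (Ne.symm hxy)
        have h1 : (f.1 x - f.1 y) / f.1 x ≤ 1 := by
          rw [div_le_one hfx]
          have := (f.2 y).le
          linarith
        calc c x y * (f.1 x - f.1 y) / f.1 x
            = c x y * ((f.1 x - f.1 y) / f.1 x) := by ring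
          _ ≤ c x y * 1 := mul_le_mul_of_nonneg_left h1 hcxy
          _ = c x y := mul_one _
          _ ≤ |c x y| := le_abs_self _
    have hBx : (0:ℝ) ≤ ∑ y, |c x y| :=
      Finset.sum_nonneg fun y _ => abs_nonneg _
    calc μ x * ((f.1 x)⁻¹ * (-(∑ y, c x y * (f.1 y - f.1 x))))
        ≤ μ x * (∑ y, |c x y|) := mul_le_mul_of_nonneg_left hinner (hμ x)
      _ ≤ 1 * (∑ y, |c x y|) := mul_le_mul_of_nonneg_right (hμ1 x) hBx
      _ = ∑ y, |c x y| := one_mul _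
  set S := ⨆ f : {f : Ω → ℝ // ∀ x, 0 < f x},
      ∑ x, μ x * ((f.1 x)⁻¹ * (-(∑ y, c x y * (f.1 y - f.1 x)))) with hS
  set C : ℝ := ∑ x, π x * |Lg x| with hC
  have hCnn : 0 ≤ C :=
    Finset.sum_nonneg fun x _ => mul_nonneg (hπpos x).le (abs_nonneg _)
  -- Step 3 : for every ε > 0, LHS ≤ S + ε * C
  have hstep : ∀ ε : ℝ, 0 < ε →
      (∑ x, π x * g x * (-(Lg x))) ≤ S + ε * C := by
    intro ε hε
    set fε : {f : Ω → ℝ // ∀ x, 0 < f x} :=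
      ⟨fun x => g x + ε, fun x => add_pos_of_nonneg_of_pos (hgnn x) hε⟩ with hfε
    have hval : (∑ x, μ x * ((fε.1 x)⁻¹ * (-(∑ y, c x y * (fε.1 y - fε.1 x)))))
        = ∑ x, μ x * ((g x + ε)⁻¹ * (-(Lg x))) := by
      apply Finset.sum_congr rfl
      intro x _
      simp only [hfε, hLg, add_sub_add_right_eq_sub]
    have hle : ∀ x : Ω, π x * g x * (-(Lg x))
        ≤ μ x * ((g x + ε)⁻¹ * (-(Lg x))) + ε * (π x * |Lg x|) := by
      intro x
      have hp := hπpos x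
      have ht := hgnn x
      have htε : 0 < g x + ε := add_pos_of_nonneg_of_pos ht hε
      have habs1 : -(Lg x) ≤ |Lg x| := neg_le_abs _
      have habs2 : Lg x ≤ |Lg x| := le_abs_self _
      have habs0 : 0 ≤ |Lg x| := abs_nonneg _
      rw [← hμg x]
      have hinv' : (g x + ε) * (g x + ε)⁻¹ = 1 := mul_inv_cancel₀ htε.ne'
      have hkey : (π x * g x - π x * (g x * g x) * (g x + ε)⁻¹)
          = π x * g x * ε * (g x + ε)⁻¹ := by
        field_simp
        ring
      have h2 : π x * g x * ε * (g x + ε)⁻¹ * (-(Lg x)) ≤ ε * (π x * |Lg x|) := by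
        have hcoef : 0 ≤ π x * g x * ε * (g x + ε)⁻¹ :=
          mul_nonneg (mul_nonneg (mul_nonneg hp.le ht) hε.le) (inv_nonneg.2 htε.le)
        have hcoef2 : π x * g x * ε * (g x + ε)⁻¹ ≤ ε * π x := by
          rw [mul_inv_le_iff₀ htε]
          nlinarith [mul_nonneg (mul_nonneg hε.le hp.le) hε.le]
        calc π x * g x * ε * (g x + ε)⁻¹ * (-(Lg x))
            ≤ π x * g x * ε * (g x + ε)⁻¹ * |Lg x| :=
              mul_le_mul_of_nonneg_left habs1 hcoef
          _ ≤ ε * π x * |Lg x| := mul_le_mul_of_nonneg_right hcoef2 habs0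
          _ = ε * (π x * |Lg x|) := by ring
      have h3 : (π x * g x - π x * (g x * g x) * (g x + ε)⁻¹) * (-(Lg x))
          ≤ ε * (π x * |Lg x|) := by rw [hkey]; exact h2
      nlinarith [h3]
    calc (∑ x, π x * g x * (-(Lg x)))
        ≤ ∑ x, (μ x * ((g x + ε)⁻¹ * (-(Lg x))) + ε * (π x * |Lg x|)) :=
          Finset.sum_le_sum fun x _ => hle x
      _ = (∑ x, μ x * ((g x + ε)⁻¹ * (-(Lg x)))) + ε * C := by
          rw [Finset.sum_add_distrib, hC, Finset.mul_sum]
      _ ≤ S + ε * C := by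
          have := le_ciSup hBdd fε
          rw [hval] at this
          linarith
  rw [hsym]
  apply le_of_forall_pos_le_add
  intro δ hδ
  have hε : 0 < δ / (C + 1) := div_pos hδ (by linarith)
  have := hstep (δ / (C + 1)) hε
  have hCle : δ / (C + 1) * C ≤ δ := by
    rw [div_mul_eq_mul_div, div_le_iff₀ (by linarith : (0:ℝ) < C + 1)]
    nlinarith
  linarith
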